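/- The metric is an eigenvector of the braiding matrix in both index pairs: Σ_{a,b} C_{ab} R̂^{ab}_{cd} = ε r^{ε−N} C_{cd} and Σ_{c,d} C^{cd} R̂^{ab}_{cd} = ε r^{ε−N} C^{ab}, for all free indices. -/

import Mathlib

open Finset

/-- The three series `B_n` (N = 2n+1, ε = +1), `C_n` (N = 2n, ε = −1),
`D_n` (N = 2n, ε = +1). -/
inductive BCDSeries : Type
  | B : BCDSeries
  | C : BCDSeries
  | D : BCDSeries
deriving DecidableEq

/-- Kronecker delta with values in `ℂ`. -/
def kd {α : Type*} [DecidableEq α] (a b : α) : ℂ := if a = b then 1 else 0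

/-- The dimension `N` of the fundamental representation. -/
def bigN : BCDSeries → ℕ → ℕ
  | BCDSeries.B, n => 2 * n + 1
  | BCDSeries.C, n => 2 * n
  | BCDSeries.D, n => 2 * n

/-- The sign `ε`: `+1` for the orthogonal series `B_n, D_n`, `−1` for the symplectic
series `C_n`. -/
def epsZ : BCDSeries → ℤ
  | BCDSeries.B => 1
  | BCDSeries.C => -1
  | BCDSeries.D => 1

/-- The sign `ε` as a complex number. -/
noncomputable def epsC (S : BCDSeries) : ℂ := (epsZ S : ℂ)

/-- `ε_a` (for the 0-based index `i`, paper index `i+1`): `+1` for `B_n, D_n`; for `C_n`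
it is `+1` for paper index `≤ n` and `−1` for paper index `> n`. -/
def epsA (S : BCDSeries) (n i : ℕ) : ℂ :=
  match S with
  | BCDSeries.C => if i < n then 1 else -1
  | _ => 1

/-- `2·ρ_a ∈ ℤ` for the 0-based index `i` (paper index `i+1`); `ρ` is the vector
`(N/2−1, …, 1/2, 0, −1/2, …, −N/2+1)` for `B_n`, `(N/2, …, 1, −1, …, −N/2)` for `C_n`,
and `(N/2−1, …, 1, 0, 0, −1, …, −N/2+1)` for `D_n`. -/
def twoRho (S : BCDSeries) (n i : ℕ) : ℤ :=
  match S with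
  | BCDSeries.B =>
      if i < n then (2 * n + 1 : ℤ) - 2 * (i + 1)
      else if i = n then 0
      else (2 * n + 3 : ℤ) - 2 * (i + 1)
  | BCDSeries.C =>
      if i < n then (2 * n + 2 : ℤ) - 2 * (i + 1) else (2 * n : ℤ) - 2 * (i + 1)
  | BCDSeries.D =>
      if i < n then (2 * n : ℤ) - 2 * (i + 1) else (2 * n + 2 : ℤ) - 2 * (i + 1)

/-- `δ^{a n₂}` as a complex number: for `B_n` it is 1 iff the 0-based index `i` equals `n`
(paper index `n₂ = (N+1)/2 = n+1`); for `C_n, D_n` there is no index `n₂` and it is 0. -/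
def isN2 (S : BCDSeries) (n i : ℕ) : ℂ :=
  match S with
  | BCDSeries.B => if i = n then 1 else 0
  | _ => 0

/-- The primed index `a' = N+1−a` (in 0-based indexing, `a' = N−1−a`). -/
def pr {N : ℕ} (a : Fin N) : Fin N := ⟨N - 1 - a.val, by have := a.isLt; omega⟩

/-- The metric `C_{ab} = ε_a r^{−ρ_a} δ_{a b'}`, where `r^ρ := s^{2ρ}` for a fixed square
root `s` of `r`. -/
noncomputable def Cmet (S : BCDSeries) (n : ℕ) (s : ℂ)
    (a b : Fin (bigN S n)) : ℂ :=
  epsA S n a.val * s ^ (-(twoRho S n a.val)) * kd b (pr a)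

/-- The inverse metric `C^{ab} = ε C_{ab}`. -/
noncomputable def Cup (S : BCDSeries) (n : ℕ) (s : ℂ)
    (a b : Fin (bigN S n)) : ℂ :=
  epsC S * Cmet S n s a b

/-- The multiparametric `B,C,D` R-matrix
`R^{ab}_{cd} = δ^a_c δ^b_d [r/q_{ab} + (r−1)δ^{ab} + (r⁻¹−1)δ^{a b'}](1−δ^{a n₂})
  + δ^a_{n₂} δ^b_{n₂} δ^{n₂}_c δ^{n₂}_d
  + (r−r⁻¹)[θ^{ab} δ^b_c δ^a_d − ε_a ε_c θ^{ac} r^{ρ_a−ρ_c} δ^{a'b} δ_{c'd}]`,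
with `θ^{ab} = 1` iff `a > b`, and `r^ρ := s^{2ρ}`.  Indices are 0-based. -/
noncomputable def Rbcd (S : BCDSeries) (n : ℕ) (r s : ℂ)
    (q : Fin (bigN S n) → Fin (bigN S n) → ℂ)
    (a b c d : Fin (bigN S n)) : ℂ :=
  kd a c * kd b d *
      (r / q a b + (r - 1) * kd a b + (r⁻¹ - 1) * kd b (pr a)) * (1 - isN2 S n a.val)
    + isN2 S n a.val * isN2 S n b.val * isN2 S n c.val * isN2 S n d.val
    + (r - r⁻¹) *
        ((if b < a then (1 : ℂ) else 0) * kd b c * kd a d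
          - epsA S n a.val * epsA S n c.val * (if c < a then (1 : ℂ) else 0) *
              s ^ (twoRho S n a.val - twoRho S n c.val) * kd b (pr a) * kd d (pr c))

/-- `R̂^{ab}_{cd} := R^{ba}_{cd}`. -/
noncomputable def RbcdHat (S : BCDSeries) (n : ℕ) (r s : ℂ)
    (q : Fin (bigN S n) → Fin (bigN S n) → ℂ)
    (a b c d : Fin (bigN S n)) : ℂ :=
  Rbcd S n r s q b a c d

/-- The R-matrix with all deformation parameters inverted, `R_{q⁻¹,r⁻¹}` (also the chosen
square root `s` of `r` is replaced by `s⁻¹`). -/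
noncomputable def RbcdInv (S : BCDSeries) (n : ℕ) (r s : ℂ)
    (q : Fin (bigN S n) → Fin (bigN S n) → ℂ)
    (a b c d : Fin (bigN S n)) : ℂ :=
  Rbcd S n r⁻¹ s⁻¹ (fun x y => (q x y)⁻¹) a b c d

section AuxLem

lemma kd_self {α : Type*} [DecidableEq α] (a : α) : kd a a = 1 := if_pos rfl

lemma kd_comm {α : Type*} [DecidableEq α] (a b : α) : kd a b = kd b a := by
  unfold kd; by_cases h : a = b
  · subst h; rfl
  · rw [if_neg h, if_neg (fun hh => h hh.symm)]

lemma pr_val {N : ℕ} (a : Fin N) : (pr a).val = N - 1 - a.val := rfl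

lemma pr_pr {N : ℕ} (a : Fin N) : pr (pr a) = a := by
  have := a.isLt; apply Fin.ext; rw [pr_val, pr_val]; omega

def prEquiv (N : ℕ) : Equiv (Fin N) (Fin N) := ⟨pr, pr, pr_pr, pr_pr⟩

lemma sum_pr {N : ℕ} (f : Fin N → ℂ) : (∑ a, f (pr a)) = ∑ a, f a :=
  Equiv.sum_comp (prEquiv N) f

lemma pr_lt_pr {N : ℕ} (a b : Fin N) : pr a < pr b ↔ b < a := by
  have := a.isLt; have := b.isLt
  rw [Fin.lt_def, Fin.lt_def, pr_val, pr_val]; omega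

lemma sum_kd_left {N : ℕ} (b : Fin N) (f : Fin N → ℂ) :
    (∑ a, kd a b * f a) = f b := by
  rw [Finset.sum_eq_single b]
  · simp [kd]
  · intro a _ hab; simp [kd, hab]
  · intro h; exact absurd (Finset.mem_univ b) h

lemma isN2_B (n i : ℕ) : isN2 BCDSeries.B n i = if i = n then 1 else 0 := rfl
lemma isN2_C (n i : ℕ) : isN2 BCDSeries.C n i = 0 := rfl
lemma isN2_D (n i : ℕ) : isN2 BCDSeries.D n i = 0 := rfl

lemma isN2_pr (S : BCDSeries) (n : ℕ) (a : Fin (bigN S n)) :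
    isN2 S n (pr a).val = isN2 S n a.val := by
  cases S
  case B =>
    have ha : a.val < 2*n+1 := a.isLt
    have hd : ((pr a).val = n) ↔ (a.val = n) := by
      rw [pr_val]; show (2*n+1 - 1 - a.val = n) ↔ _; omega
    rw [isN2_B, isN2_B, if_congr hd rfl rfl]
  case C => rfl
  case D => rfl

lemma twoRho_pr (S : BCDSeries) (n : ℕ) (a : Fin (bigN S n)) :
    twoRho S n (pr a).val = - twoRho S n a.val := by
  cases S
  case B =>
    have ha : a.val < 2*n+1 := a.isLt
    have hv : (pr a).val = 2*n+1 - 1 - a.val := pr_val a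
    simp only [twoRho, hv]; split_ifs <;> omega
  case C =>
    have ha : a.val < 2*n := a.isLt
    have hv : (pr a).val = 2*n - 1 - a.val := pr_val a
    simp only [twoRho, hv]; split_ifs <;> omega
  case D =>
    have ha : a.val < 2*n := a.isLt
    have hv : (pr a).val = 2*n - 1 - a.val := pr_val a
    simp only [twoRho, hv]; split_ifs <;> omega

lemma epsA_B (n i : ℕ) : epsA BCDSeries.B n i = 1 := rfl
lemma epsA_D (n i : ℕ) : epsA BCDSeries.D n i = 1 := rfl
lemma epsA_C (n i : ℕ) : epsA BCDSeries.C n i = if i < n then 1 else -1 := rfl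

lemma epsC_B : epsC BCDSeries.B = 1 := by norm_num [epsC, epsZ]
lemma epsC_C : epsC BCDSeries.C = -1 := by norm_num [epsC, epsZ]
lemma epsC_D : epsC BCDSeries.D = 1 := by norm_num [epsC, epsZ]

lemma epsA_pr_mul (S : BCDSeries) (n : ℕ) (a : Fin (bigN S n)) :
    epsA S n (pr a).val * epsA S n a.val = epsC S := by
  cases S
  case B => rw [epsA_B, epsA_B, epsC_B]; norm_num
  case C =>
    have ha : a.val < 2*n := a.isLt
    have hv : (pr a).val = 2*n - 1 - a.val := pr_val a
    rw [epsA_C, epsA_C, epsC_C, hv]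
    split_ifs <;> first | (exfalso; omega) | norm_num
  case D => rw [epsA_D, epsA_D, epsC_D]; norm_num

lemma epsA_sq (S : BCDSeries) (n i : ℕ) : epsA S n i * epsA S n i = 1 := by
  cases S
  case B => rw [epsA_B]; norm_num
  case C => rw [epsA_C]; split_ifs <;> norm_num
  case D => rw [epsA_D]; norm_num

lemma epsC_sq (S : BCDSeries) : epsC S * epsC S = 1 := by
  cases S <;> norm_num [epsC, epsZ]

lemma epsA_pr (S : BCDSeries) (n : ℕ) (a : Fin (bigN S n)) :
    epsA S n (pr a).val = epsC S * epsA S n a.val := by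
  have h1 := epsA_pr_mul S n a
  have h2 := epsA_sq S n a.val
  linear_combination epsA S n a.val * h1 - epsA S n (pr a).val * h2

lemma isN2_mul_self (S : BCDSeries) (n i : ℕ) :
    isN2 S n i * isN2 S n i = isN2 S n i := by
  cases S
  case B => rw [isN2_B]; split_ifs <;> norm_num
  case C => rw [isN2_C]; norm_num
  case D => rw [isN2_D]; norm_num

lemma twoRho_B_n (n : ℕ) : twoRho BCDSeries.B n n = 0 := by
  simp only [twoRho]; split_ifs <;> omega

lemma isN2_mul_E (S : BCDSeries) (n i : ℕ) (s : ℂ) :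
    isN2 S n i * (epsA S n i * s ^ (-(twoRho S n i))) = isN2 S n i := by
  cases S
  case B =>
    rw [isN2_B, epsA_B]
    by_cases h : i = n
    · subst h; rw [if_pos rfl, twoRho_B_n]; norm_num
    · rw [if_neg h]; ring
  case C => rw [isN2_C]; ring
  case D => rw [isN2_D]; ring

lemma kd_prc (S : BCDSeries) (n : ℕ) (c : Fin (bigN S n)) :
    kd c (pr c) * (1 - isN2 S n c.val) = 0 := by
  have hc := c.isLt
  by_cases h : c = pr c
  · rw [← h, kd_self, one_mul]
    have hv : c.val = bigN S n - 1 - c.val := congrArg Fin.val h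
    cases S with
    | B =>
      have hc' : c.val < 2*n+1 := hc
      have hv' : c.val = 2*n+1 - 1 - c.val := hv
      rw [isN2_B, if_pos (by omega)]; ring
    | C =>
      have hc' : c.val < 2*n := hc
      have hv' : c.val = 2*n - 1 - c.val := hv
      omega
    | D =>
      have hc' : c.val < 2*n := hc
      have hv' : c.val = 2*n - 1 - c.val := hv
      omega
  · rw [kd, if_neg h, zero_mul]

lemma spow {s r : ℂ} (hs : s ^ 2 = r) (m : ℤ) : s ^ (2*m) = r ^ m := by
  have h2 : s ^ (2:ℤ) = r := by rw [← hs]; norm_cast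
  rw [zpow_mul, h2]

lemma gen1 {r : ℂ} (hr : r ≠ 0) (e : ℤ) :
    r ^ (e+2-1) = r ^ (e-1) + (r - r⁻¹) * r ^ e := by
  have h1 : r ^ (e+2-1) = r ^ e * r := by rw [show e+2-1 = e+1 by ring, zpow_add_one₀ hr]
  have h2 : r ^ (e-1) = r ^ e * r⁻¹ := by rw [zpow_sub_one₀ hr]
  rw [h1, h2]; field_simp; ring

lemma sum_isN2_E (S : BCDSeries) (n : ℕ) (s : ℂ) :
    (∑ a : Fin (bigN S n), isN2 S n a.val * isN2 S n a.val *
      (epsA S n a.val * s ^ (-(twoRho S n a.val))))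
    = (if S = BCDSeries.B then 1 else 0) := by
  cases S
  case B =>
    rw [if_pos rfl]
    rw [Finset.sum_eq_single (⟨n, by show n < 2*n+1; omega⟩ : Fin (bigN BCDSeries.B n))]
    · show isN2 BCDSeries.B n n * _ * (epsA BCDSeries.B n n * _) = 1
      rw [isN2_B, epsA_B, if_pos rfl, twoRho_B_n]; norm_num
    · intro a _ hab
      have : a.val ≠ n := fun h => hab (Fin.ext h)
      rw [isN2_B, if_neg this]; ring
    · intro h; exact absurd (Finset.mem_univ _) h
  case C => rw [if_neg (by simp)]; simp [isN2_C]
  case D => rw [if_neg (by simp)]; simp [isN2_D]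

end AuxLem
section KLem

lemma Kstep (S : BCDSeries) (n : ℕ) (r : ℂ) (hr : r ≠ 0) (j : ℕ)
    (hj : j + 2 ≤ bigN S n) :
    epsC S * r ^ (twoRho S n j - 1) * (1 - isN2 S n j) + isN2 S n j
      + (r - r⁻¹) * (if j < bigN S n - 1 - j then (1:ℂ) else 0)
    = epsC S * r ^ (twoRho S n (j+1) - 1) * (1 - isN2 S n (j+1)) + isN2 S n (j+1)
      + (r - r⁻¹) * (if j+1 < bigN S n - 1 - (j+1) then (1:ℂ) else 0)
      + (r - r⁻¹) * epsC S * r ^ (twoRho S n (j+1)) := by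
  cases S
  case B =>
    have hN : bigN BCDSeries.B n = 2*n+1 := rfl
    rw [hN] at hj ⊢
    rw [epsC_B, isN2_B, isN2_B]
    rcases Nat.lt_or_ge (j+1) n with hc | hc
    · -- generic lower
      have t1 : twoRho BCDSeries.B n j = twoRho BCDSeries.B n (j+1) + 2 := by
        simp only [twoRho]; split_ifs <;> omega
      rw [t1, if_neg (by omega : ¬ j = n), if_neg (by omega : ¬ j+1 = n),
        if_pos (by omega : j < 2*n+1-1-j), if_pos (by omega : j+1 < 2*n+1-1-(j+1))]
      linear_combination gen1 hr (twoRho BCDSeries.B n (j+1))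
    rcases Nat.lt_or_ge j n with hc2 | hc2
    · -- j+1 = n
      have hjn : j + 1 = n := by omega
      have t1 : twoRho BCDSeries.B n j = 1 := by simp only [twoRho]; split_ifs <;> omega
      have t2 : twoRho BCDSeries.B n (j+1) = 0 := by simp only [twoRho]; split_ifs <;> omega
      rw [t1, t2, if_neg (by omega : ¬ j = n), if_pos hjn,
        if_pos (by omega : j < 2*n+1-1-j), if_neg (by omega : ¬ j+1 < 2*n+1-1-(j+1))]
      norm_num
    rcases Nat.eq_or_lt_of_le hc2 with hc3 | hc3
    · -- j = n
      have t2 : twoRho BCDSeries.B n (j+1) = -1 := by simp only [twoRho]; split_ifs <;> omega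
      have hm1 : r ^ (-1 : ℤ) = r⁻¹ := by norm_num
      have hm2 : r ^ ((-1 : ℤ) - 1) = r⁻¹ * r⁻¹ := by
        rw [zpow_sub_one₀ hr, hm1]
      rw [t2, if_pos hc3.symm, if_neg (by omega : ¬ j+1 = n),
        if_neg (by omega : ¬ j < 2*n+1-1-j), if_neg (by omega : ¬ j+1 < 2*n+1-1-(j+1)),
        hm1, hm2]
      field_simp; ring
    · -- j > n
      have t1 : twoRho BCDSeries.B n j = twoRho BCDSeries.B n (j+1) + 2 := by
        simp only [twoRho]; split_ifs <;> omega
      rw [t1, if_neg (by omega : ¬ j = n), if_neg (by omega : ¬ j+1 = n),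
        if_neg (by omega : ¬ j < 2*n+1-1-j), if_neg (by omega : ¬ j+1 < 2*n+1-1-(j+1))]
      linear_combination gen1 hr (twoRho BCDSeries.B n (j+1))
  case C =>
    have hN : bigN BCDSeries.C n = 2*n := rfl
    rw [hN] at hj ⊢
    rw [epsC_C, isN2_C, isN2_C]
    rcases Nat.lt_or_ge (j+1) n with hc | hc
    · have t1 : twoRho BCDSeries.C n j = twoRho BCDSeries.C n (j+1) + 2 := by
        simp only [twoRho]; split_ifs <;> omega
      rw [t1, if_pos (by omega : j < 2*n-1-j), if_pos (by omega : j+1 < 2*n-1-(j+1))]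
      linear_combination (-1 : ℂ) * gen1 hr (twoRho BCDSeries.C n (j+1))
    rcases Nat.lt_or_ge j n with hc2 | hc2
    · -- j+1 = n
      have t1 : twoRho BCDSeries.C n j = 2 := by simp only [twoRho]; split_ifs <;> omega
      have t2 : twoRho BCDSeries.C n (j+1) = -2 := by simp only [twoRho]; split_ifs <;> omega
      have hp1 : r ^ ((2:ℤ) - 1) = r := by norm_num
      have hp2 : r ^ (-2 : ℤ) = r⁻¹ * r⁻¹ := by
        rw [show (-2 : ℤ) = -1 + -1 by norm_num, zpow_add₀ hr]; norm_num
      have hp3 : r ^ ((-2:ℤ) - 1) = r⁻¹ * r⁻¹ * r⁻¹ := by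
        rw [zpow_sub_one₀ hr, hp2]
      rw [t1, t2, hp1, hp2, hp3, if_pos (by omega : j < 2*n-1-j),
        if_neg (by omega : ¬ j+1 < 2*n-1-(j+1))]
      field_simp; ring
    · -- j ≥ n
      have t1 : twoRho BCDSeries.C n j = twoRho BCDSeries.C n (j+1) + 2 := by
        simp only [twoRho]; split_ifs <;> omega
      rw [t1, if_neg (by omega : ¬ j < 2*n-1-j), if_neg (by omega : ¬ j+1 < 2*n-1-(j+1))]
      linear_combination (-1 : ℂ) * gen1 hr (twoRho BCDSeries.C n (j+1))
  case D =>
    have hN : bigN BCDSeries.D n = 2*n := rfl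
    rw [hN] at hj ⊢
    rw [epsC_D, isN2_D, isN2_D]
    rcases Nat.lt_or_ge (j+1) n with hc | hc
    · have t1 : twoRho BCDSeries.D n j = twoRho BCDSeries.D n (j+1) + 2 := by
        simp only [twoRho]; split_ifs <;> omega
      rw [t1, if_pos (by omega : j < 2*n-1-j), if_pos (by omega : j+1 < 2*n-1-(j+1))]
      linear_combination gen1 hr (twoRho BCDSeries.D n (j+1))
    rcases Nat.lt_or_ge j n with hc2 | hc2
    · -- j+1 = n
      have t1 : twoRho BCDSeries.D n j = 0 := by simp only [twoRho]; split_ifs <;> omega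
      have t2 : twoRho BCDSeries.D n (j+1) = 0 := by simp only [twoRho]; split_ifs <;> omega
      rw [t1, t2, if_pos (by omega : j < 2*n-1-j), if_neg (by omega : ¬ j+1 < 2*n-1-(j+1))]
      norm_num
    · -- j ≥ n
      have t1 : twoRho BCDSeries.D n j = twoRho BCDSeries.D n (j+1) + 2 := by
        simp only [twoRho]; split_ifs <;> omega
      rw [t1, if_neg (by omega : ¬ j < 2*n-1-j), if_neg (by omega : ¬ j+1 < 2*n-1-(j+1))]
      linear_combination gen1 hr (twoRho BCDSeries.D n (j+1))

lemma Knat (S : BCDSeries) (n : ℕ) (r : ℂ) (hr : r ≠ 0) :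
    ∀ (m j : ℕ), j + m + 1 = bigN S n →
      epsC S * r ^ (twoRho S n j - 1) * (1 - isN2 S n j) + isN2 S n j
        + (r - r⁻¹) * (if j < bigN S n - 1 - j then (1:ℂ) else 0)
        - (r - r⁻¹) * epsC S * ∑ i ∈ Finset.Ico (j+1) (bigN S n), r ^ (twoRho S n i)
      = epsC S * r ^ (epsZ S - (bigN S n : ℤ)) := by
  intro m
  induction m with
  | zero =>
    intro j hj
    have hIco : Finset.Ico (j+1) (bigN S n) = ∅ := by
      rw [show j+1 = bigN S n from by omega]; exact Finset.Ico_self _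
    rw [hIco, Finset.sum_empty, mul_zero, sub_zero]
    cases S
    case B =>
      have hN : bigN BCDSeries.B n = 2*n+1 := rfl
      rw [hN] at hj ⊢
      rw [epsC_B, isN2_B, epsZ]
      rcases Nat.eq_zero_or_pos n with h0 | h1
      · subst h0
        have hj0 : j = 0 := by omega
        subst hj0
        rw [if_pos rfl, if_neg (by omega : ¬ (0:ℕ) < 2*0+1-1-0)]
        norm_num
      · have hi : ¬ j = n := by omega
        have ht : twoRho BCDSeries.B n j - 1 = 1 - (((2*n+1 : ℕ) : ℤ)) := by
          simp only [twoRho]; split_ifs <;> push_cast <;> omega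
        rw [if_neg hi, ht, if_neg (by omega : ¬ j < 2*n+1-1-j)]
        ring
    case C =>
      have hN : bigN BCDSeries.C n = 2*n := rfl
      rw [hN] at hj ⊢
      rw [epsC_C, isN2_C, epsZ]
      have ht : twoRho BCDSeries.C n j - 1 = -1 - (((2*n : ℕ) : ℤ)) := by
        simp only [twoRho]; split_ifs <;> push_cast <;> omega
      rw [ht, if_neg (by omega : ¬ j < 2*n-1-j)]
      ring
    case D =>
      have hN : bigN BCDSeries.D n = 2*n := rfl
      rw [hN] at hj ⊢
      rw [epsC_D, isN2_D, epsZ]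
      have ht : twoRho BCDSeries.D n j - 1 = 1 - (((2*n : ℕ) : ℤ)) := by
        simp only [twoRho]; split_ifs <;> push_cast <;> omega
      rw [ht, if_neg (by omega : ¬ j < 2*n-1-j)]
      ring
  | succ m ih =>
    intro j hj
    have hK1 := ih (j+1) (by omega)
    have hsplit : (∑ i ∈ Finset.Ico (j+1) (bigN S n), r ^ (twoRho S n i))
        = r ^ (twoRho S n (j+1)) + ∑ i ∈ Finset.Ico (j+1+1) (bigN S n), r ^ (twoRho S n i) :=
      Finset.sum_eq_sum_Ico_succ_bot (by omega) _
    rw [hsplit]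
    have hstep := Kstep S n r hr j (by omega)
    linear_combination hstep + hK1

lemma KFin (S : BCDSeries) (n : ℕ) (r : ℂ) (hr : r ≠ 0) (c : Fin (bigN S n)) :
    epsC S * r ^ (twoRho S n c.val - 1) * (1 - isN2 S n c.val) + isN2 S n c.val
      + (r - r⁻¹) * (if c < pr c then (1:ℂ) else 0)
      - (r - r⁻¹) * epsC S *
          ∑ b : Fin (bigN S n), (if c < b then r ^ (twoRho S n b.val) else 0)
    = epsC S * r ^ (epsZ S - (bigN S n : ℤ)) := by
  have hsum : (∑ b : Fin (bigN S n), if c < b then r ^ (twoRho S n b.val) else 0)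
      = ∑ i ∈ Finset.Ico (c.val+1) (bigN S n), r ^ (twoRho S n i) := by
    have h1 : ∀ b : Fin (bigN S n), (if c < b then r ^ (twoRho S n b.val) else 0)
        = (fun i : ℕ => if c.val < i then r ^ (twoRho S n i) else 0) b.val := by
      intro b
      show (if c < b then r ^ (twoRho S n b.val) else 0)
          = (if c.val < b.val then r ^ (twoRho S n b.val) else 0)
      exact if_congr Fin.lt_def rfl rfl
    rw [Finset.sum_congr rfl (fun b _ => h1 b),
      Fin.sum_univ_eq_sum_range (fun i : ℕ => if c.val < i then r ^ (twoRho S n i) else 0) (bigN S n),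
      ← Finset.sum_filter]
    congr 1; ext i
    simp only [Finset.mem_filter, Finset.mem_range, Finset.mem_Ico]; omega
  have hθ : (c < pr c) ↔ (c.val < bigN S n - 1 - c.val) := by
    rw [Fin.lt_def, pr_val]
  rw [hsum, if_congr hθ rfl rfl]
  exact Knat S n r hr (bigN S n - 1 - c.val) c.val (by have := c.isLt; omega)

end KLem
section Part1

lemma isN2_mul_ne (S : BCDSeries) (n : ℕ) (c d : Fin (bigN S n)) (hdc : d ≠ pr c) :
    isN2 S n c.val * isN2 S n d.val = 0 := by
  cases S with
  | B =>
    rw [isN2_B, isN2_B]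
    have hc : c.val < 2*n+1 := c.isLt
    by_cases h1 : c.val = n
    · by_cases h2 : d.val = n
      · exfalso; apply hdc; apply Fin.ext; rw [pr_val, h2]
        show n = 2*n+1 - 1 - c.val; omega
      · rw [if_neg h2]; ring
    · rw [if_neg h1]; ring
  | C => rw [isN2_C]; ring
  | D => rw [isN2_D]; ring

lemma isN2_pair (S : BCDSeries) (n : ℕ) (i j : ℕ) :
    isN2 S n i * isN2 S n j * (if S = BCDSeries.B then (1:ℂ) else 0)
      = isN2 S n i * isN2 S n j := by
  cases S with
  | B => rw [if_pos rfl, mul_one]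
  | C => rw [isN2_C]; ring
  | D => rw [isN2_D]; ring

lemma part1 (S : BCDSeries) (n : ℕ) (r s : ℂ) (hr : r ≠ 0) (hs : s ^ 2 = r)
    (q : Fin (bigN S n) → Fin (bigN S n) → ℂ)
    (hqaa : ∀ a, q a a = r)
    (hqpr1 : ∀ a b, q a b * q a (pr b) = r ^ 2)
    (hqpr2 : ∀ a b, q a b * q (pr a) b = r ^ 2)
    (c d : Fin (bigN S n)) :
    (∑ a : Fin (bigN S n), ∑ b : Fin (bigN S n),
        Cmet S n s a b * RbcdHat S n r s q a b c d)
      = epsC S * r ^ (epsZ S - (bigN S n : ℤ)) * Cmet S n s c d := by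
  have hs0 : s ≠ 0 := fun h => hr (by rw [← hs, h]; ring)
  have hqpd : ∀ x : Fin (bigN S n), q (pr x) x = r := by
    intro x
    have h := hqpr2 x x; rw [hqaa x] at h
    have h2 : r * q (pr x) x = r * r := by rw [h]; ring
    exact mul_left_cancel₀ hr h2
  have hqcpr : ∀ x : Fin (bigN S n), q x (pr x) = r := by
    intro x
    have h := hqpr1 x x; rw [hqaa x] at h
    have h2 : r * q x (pr x) = r * r := by rw [h]; ring
    exact mul_left_cancel₀ hr h2
  have step1 : ∀ a : Fin (bigN S n),
      (∑ b : Fin (bigN S n), Cmet S n s a b * RbcdHat S n r s q a b c d)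
      = (epsA S n a.val * s ^ (-(twoRho S n a.val))) * Rbcd S n r s q (pr a) a c d := by
    intro a
    rw [Finset.sum_eq_single (pr a)]
    · simp only [Cmet, RbcdHat, kd_self]; ring
    · intro b _ hb; simp only [Cmet, kd, if_neg hb]; ring
    · intro h; exact absurd (Finset.mem_univ _) h
  rw [Finset.sum_congr rfl (fun a _ => step1 a)]
  have step2 : ∀ a : Fin (bigN S n),
      (epsA S n a.val * s ^ (-(twoRho S n a.val))) * Rbcd S n r s q (pr a) a c d
      = kd a d * (kd (pr a) c * ((epsA S n a.val * s ^ (-(twoRho S n a.val)))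
            * (r / q (pr a) a + (r - 1) * kd (pr a) a + (r⁻¹ - 1)) * (1 - isN2 S n a.val)))
        + (isN2 S n c.val * isN2 S n d.val) * (isN2 S n a.val * isN2 S n a.val
            * (epsA S n a.val * s ^ (-(twoRho S n a.val))))
        + (r - r⁻¹) * (kd a c * ((if a < pr a then (1:ℂ) else 0) * kd (pr a) d
            * (epsA S n a.val * s ^ (-(twoRho S n a.val)))))
        - ((r - r⁻¹) * epsA S n c.val * kd d (pr c)) * ((if c < pr a then (1:ℂ) else 0)
            * (epsA S n (pr a).val * (epsA S n a.val * s ^ (-(twoRho S n a.val)))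
              * s ^ (-twoRho S n a.val - twoRho S n c.val))) := by
    intro a
    simp only [Rbcd, pr_pr, isN2_pr, twoRho_pr, kd_self]
    ring
  rw [Finset.sum_congr rfl (fun a _ => step2 a)]
  rw [Finset.sum_sub_distrib, Finset.sum_add_distrib, Finset.sum_add_distrib]
  rw [sum_kd_left d (fun a => kd (pr a) c * ((epsA S n a.val * s ^ (-(twoRho S n a.val)))
        * (r / q (pr a) a + (r - 1) * kd (pr a) a + (r⁻¹ - 1)) * (1 - isN2 S n a.val)))]
  rw [← Finset.mul_sum, sum_isN2_E, isN2_pair]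
  have hC : (∑ x : Fin (bigN S n), (r - r⁻¹) * (kd x c * ((if x < pr x then (1:ℂ) else 0)
        * kd (pr x) d * (epsA S n x.val * s ^ (-(twoRho S n x.val))))))
      = (r - r⁻¹) * ((if c < pr c then (1:ℂ) else 0) * kd (pr c) d
          * (epsA S n c.val * s ^ (-(twoRho S n c.val)))) := by
    rw [← Finset.mul_sum]
    exact congrArg _ (sum_kd_left c (fun x => (if x < pr x then (1:ℂ) else 0)
        * kd (pr x) d * (epsA S n x.val * s ^ (-(twoRho S n x.val)))))
  rw [hC]
  have hD : (∑ a : Fin (bigN S n), ((r - r⁻¹) * epsA S n c.val * kd d (pr c))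
        * ((if c < pr a then (1:ℂ) else 0)
            * (epsA S n (pr a).val * (epsA S n a.val * s ^ (-(twoRho S n a.val)))
              * s ^ (-twoRho S n a.val - twoRho S n c.val))))
      = ((r - r⁻¹) * epsA S n c.val * kd d (pr c))
        * ((∑ b : Fin (bigN S n), if c < b then r ^ (twoRho S n b.val) else 0)
            * (epsC S * s ^ (-(twoRho S n c.val)))) := by
    rw [← Finset.mul_sum]
    congr 1
    rw [← sum_pr (fun a => (if c < pr a then (1:ℂ) else 0)
        * (epsA S n (pr a).val * (epsA S n a.val * s ^ (-(twoRho S n a.val)))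
          * s ^ (-twoRho S n a.val - twoRho S n c.val)))]
    have hterm : ∀ a : Fin (bigN S n),
        (if c < pr (pr a) then (1:ℂ) else 0)
          * (epsA S n (pr (pr a)).val * (epsA S n (pr a).val * s ^ (-(twoRho S n (pr a).val)))
            * s ^ (-twoRho S n (pr a).val - twoRho S n c.val))
        = (if c < a then r ^ (twoRho S n a.val) else 0) * (epsC S * s ^ (-(twoRho S n c.val))) := by
      intro a
      rw [pr_pr, twoRho_pr, neg_neg]
      by_cases h : c < a
      · rw [if_pos h, if_pos h]
        have h1 : epsA S n a.val * epsA S n (pr a).val = epsC S := by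
          rw [mul_comm]; exact epsA_pr_mul S n a
        have h2 : s ^ (twoRho S n a.val) * s ^ (twoRho S n a.val - twoRho S n c.val)
            = r ^ (twoRho S n a.val) * s ^ (-(twoRho S n c.val)) := by
          rw [← zpow_add₀ hs0,
            show twoRho S n a.val + (twoRho S n a.val - twoRho S n c.val)
              = 2 * twoRho S n a.val + -(twoRho S n c.val) by ring,
            zpow_add₀ hs0, spow hs]
        calc (1:ℂ) * (epsA S n a.val * (epsA S n (pr a).val * s ^ (twoRho S n a.val))
              * s ^ (twoRho S n a.val - twoRho S n c.val))
            = (epsA S n a.val * epsA S n (pr a).val)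
              * (s ^ (twoRho S n a.val) * s ^ (twoRho S n a.val - twoRho S n c.val)) := by ring
          _ = r ^ (twoRho S n a.val) * (epsC S * s ^ (-(twoRho S n c.val))) := by
              rw [h1, h2]; ring
      · rw [if_neg h, if_neg h]; ring
    rw [Finset.sum_congr rfl (fun a _ => hterm a), ← Finset.sum_mul]
  rw [hD, Cmet]
  by_cases hdc : d = pr c
  · subst hdc
    simp only [pr_pr, kd_self, isN2_pr, twoRho_pr, neg_neg]
    rw [hqcpr c, div_self hr]
    have hKF := KFin S n r hr c
    have hk0 := kd_prc S n c
    have hii := isN2_mul_self S n c.val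
    have hie := isN2_mul_E S n c.val s
    have hpe := epsA_pr S n c
    have hpw : s ^ (-(twoRho S n c.val)) * r ^ (twoRho S n c.val - 1)
        = s ^ (twoRho S n c.val) * r⁻¹ := by
      rw [zpow_sub_one₀ hr, ← spow hs (twoRho S n c.val), ← mul_assoc, ← zpow_add₀ hs0,
        show -(twoRho S n c.val) + 2 * twoRho S n c.val = twoRho S n c.val by ring]
    linear_combination (epsA S n (pr c).val * s ^ (twoRho S n c.val) * (r - 1)) * hk0
      + (epsA S n c.val * s ^ (-(twoRho S n c.val))) * hKF
      + hii - hie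
      + (s ^ (twoRho S n c.val) * r⁻¹ * (1 - isN2 S n c.val)) * hpe
      - (epsC S * epsA S n c.val * (1 - isN2 S n c.val)) * hpw
  · have hk1 : kd d (pr c) = 0 := by rw [kd, if_neg hdc]
    have hk2 : kd (pr d) c = 0 := by
      rw [kd, if_neg]; intro h; exact hdc ((pr_pr d).symm.trans (congrArg pr h))
    have hk3 : kd (pr c) d = 0 := by
      rw [kd, if_neg]; intro h; exact hdc h.symm
    have hk4 := isN2_mul_ne S n c d hdc
    rw [hk1, hk2, hk3, hk4]; ring

end Part1
section Part2

lemma sum_kd_right {N : ℕ} (b : Fin N) (f : Fin N → ℂ) :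
    (∑ x, kd b x * f x) = f b := by
  rw [Finset.sum_eq_single b]
  · simp [kd]
  · intro x _ hx; rw [kd, if_neg (fun h => hx h.symm), zero_mul]
  · intro h; exact absurd (Finset.mem_univ b) h

lemma part2 (S : BCDSeries) (n : ℕ) (r s : ℂ) (hr : r ≠ 0) (hs : s ^ 2 = r)
    (q : Fin (bigN S n) → Fin (bigN S n) → ℂ)
    (hqaa : ∀ a, q a a = r)
    (hqpr1 : ∀ a b, q a b * q a (pr b) = r ^ 2)
    (a b : Fin (bigN S n)) :
    (∑ c : Fin (bigN S n), ∑ d : Fin (bigN S n),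
        Cup S n s c d * RbcdHat S n r s q a b c d)
      = epsC S * r ^ (epsZ S - (bigN S n : ℤ)) * Cup S n s a b := by
  have hs0 : s ≠ 0 := fun h => hr (by rw [← hs, h]; ring)
  have hqcpr : ∀ x : Fin (bigN S n), q x (pr x) = r := by
    intro x
    have h := hqpr1 x x; rw [hqaa x] at h
    have h2 : r * q x (pr x) = r * r := by rw [h]; ring
    exact mul_left_cancel₀ hr h2
  have step1 : ∀ c : Fin (bigN S n),
      (∑ d : Fin (bigN S n), Cup S n s c d * RbcdHat S n r s q a b c d)
      = epsC S * ((epsA S n c.val * s ^ (-(twoRho S n c.val)))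
          * Rbcd S n r s q b a c (pr c)) := by
    intro c
    rw [Finset.sum_eq_single (pr c)]
    · simp only [Cup, Cmet, RbcdHat, kd_self]; ring
    · intro d' _ hd; simp only [Cup, Cmet, kd, if_neg hd]; ring
    · intro h; exact absurd (Finset.mem_univ _) h
  rw [Finset.sum_congr rfl (fun c _ => step1 c), ← Finset.mul_sum]
  have step2 : ∀ c : Fin (bigN S n),
      (epsA S n c.val * s ^ (-(twoRho S n c.val))) * Rbcd S n r s q b a c (pr c)
      = kd b c * ((epsA S n c.val * s ^ (-(twoRho S n c.val))) * kd a (pr c)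
            * (r / q b a + (r - 1) * kd b a + (r⁻¹ - 1) * kd a (pr b)) * (1 - isN2 S n b.val))
        + (isN2 S n b.val * isN2 S n a.val) * (isN2 S n c.val * isN2 S n c.val
            * (epsA S n c.val * s ^ (-(twoRho S n c.val))))
        + (r - r⁻¹) * (kd a c * ((if a < b then (1:ℂ) else 0) * kd b (pr c)
            * (epsA S n c.val * s ^ (-(twoRho S n c.val)))))
        - ((r - r⁻¹) * epsA S n b.val * kd a (pr b)) * ((if c < b then (1:ℂ) else 0)
            * (epsA S n c.val * (epsA S n c.val * s ^ (-(twoRho S n c.val)))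
              * s ^ (twoRho S n b.val - twoRho S n c.val))) := by
    intro c
    simp only [Rbcd, isN2_pr, kd_self]
    ring
  rw [Finset.sum_congr rfl (fun c _ => step2 c)]
  rw [Finset.sum_sub_distrib, Finset.sum_add_distrib, Finset.sum_add_distrib]
  rw [sum_kd_right b (fun c => (epsA S n c.val * s ^ (-(twoRho S n c.val))) * kd a (pr c)
        * (r / q b a + (r - 1) * kd b a + (r⁻¹ - 1) * kd a (pr b)) * (1 - isN2 S n b.val))]
  rw [← Finset.mul_sum, sum_isN2_E, isN2_pair]
  have hC : (∑ x : Fin (bigN S n), (r - r⁻¹) * (kd a x * ((if a < b then (1:ℂ) else 0)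
        * kd b (pr x) * (epsA S n x.val * s ^ (-(twoRho S n x.val))))))
      = (r - r⁻¹) * ((if a < b then (1:ℂ) else 0) * kd b (pr a)
          * (epsA S n a.val * s ^ (-(twoRho S n a.val)))) := by
    rw [← Finset.mul_sum]
    exact congrArg _ (sum_kd_right a (fun x => (if a < b then (1:ℂ) else 0)
        * kd b (pr x) * (epsA S n x.val * s ^ (-(twoRho S n x.val)))))
  rw [hC]
  have hD : (∑ c : Fin (bigN S n), ((r - r⁻¹) * epsA S n b.val * kd a (pr b))
        * ((if c < b then (1:ℂ) else 0)
            * (epsA S n c.val * (epsA S n c.val * s ^ (-(twoRho S n c.val)))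
              * s ^ (twoRho S n b.val - twoRho S n c.val))))
      = ((r - r⁻¹) * epsA S n b.val * kd a (pr b))
        * ((∑ x : Fin (bigN S n), if pr b < x then r ^ (twoRho S n x.val) else 0)
            * s ^ (twoRho S n b.val)) := by
    rw [← Finset.mul_sum]
    congr 1
    have hterm : ∀ c : Fin (bigN S n),
        (if c < b then (1:ℂ) else 0)
          * (epsA S n c.val * (epsA S n c.val * s ^ (-(twoRho S n c.val)))
            * s ^ (twoRho S n b.val - twoRho S n c.val))
        = (if c < b then r ^ (-(twoRho S n c.val)) else 0) * s ^ (twoRho S n b.val) := by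
      intro c
      by_cases h : c < b
      · rw [if_pos h, if_pos h]
        have h1 := epsA_sq S n c.val
        have h2 : s ^ (-(twoRho S n c.val)) * s ^ (twoRho S n b.val - twoRho S n c.val)
            = r ^ (-(twoRho S n c.val)) * s ^ (twoRho S n b.val) := by
          rw [← zpow_add₀ hs0,
            show -(twoRho S n c.val) + (twoRho S n b.val - twoRho S n c.val)
              = 2 * (-(twoRho S n c.val)) + twoRho S n b.val by ring,
            zpow_add₀ hs0, spow hs]
        calc (1:ℂ) * (epsA S n c.val * (epsA S n c.val * s ^ (-(twoRho S n c.val)))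
              * s ^ (twoRho S n b.val - twoRho S n c.val))
            = (epsA S n c.val * epsA S n c.val)
              * (s ^ (-(twoRho S n c.val)) * s ^ (twoRho S n b.val - twoRho S n c.val)) := by ring
          _ = (1:ℂ) * (r ^ (-(twoRho S n c.val)) * s ^ (twoRho S n b.val)) := by rw [h1, h2]
          _ = r ^ (-(twoRho S n c.val)) * s ^ (twoRho S n b.val) := one_mul _
      · rw [if_neg h, if_neg h]; ring
    rw [Finset.sum_congr rfl (fun c _ => hterm c), ← Finset.sum_mul]
    congr 1
    rw [← sum_pr (fun x => if pr b < x then r ^ (twoRho S n x.val) else 0)]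
    apply Finset.sum_congr rfl
    intro x _
    rw [twoRho_pr S n x]
    exact (if_congr (pr_lt_pr b x) rfl rfl).symm
  rw [hD, Cup, Cmet]
  by_cases hab : a = pr b
  · subst hab
    simp only [pr_pr, kd_self, isN2_pr, twoRho_pr, neg_neg]
    rw [hqcpr b, div_self hr]
    have hKF := KFin S n r hr (pr b)
    simp only [pr_pr, isN2_pr, twoRho_pr, neg_neg] at hKF
    have hk0 := kd_prc S n b
    have hii := isN2_mul_self S n b.val
    have hie := isN2_mul_E S n (pr b).val s
    simp only [isN2_pr, twoRho_pr, neg_neg] at hie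
    have hpe := epsA_pr S n b
    have heps2 := epsC_sq S
    have hpw : s ^ (twoRho S n b.val) * r ^ (-twoRho S n b.val - 1)
        = s ^ (-(twoRho S n b.val)) * r⁻¹ := by
      rw [zpow_sub_one₀ hr, ← spow hs (-twoRho S n b.val), ← mul_assoc, ← zpow_add₀ hs0,
        show twoRho S n b.val + 2 * (-twoRho S n b.val) = -(twoRho S n b.val) by ring]
    linear_combination (epsC S * epsA S n b.val * s ^ (-(twoRho S n b.val)) * (r - 1)) * hk0
      + (epsC S * epsA S n (pr b).val * s ^ (twoRho S n b.val)) * hKF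
      + epsC S * hii - epsC S * hie
      - (epsC S * epsC S * epsA S n (pr b).val * (1 - isN2 S n b.val)) * hpw
      - (epsC S * epsC S * s ^ (-(twoRho S n b.val)) * r⁻¹ * (1 - isN2 S n b.val)) * hpe
      - (epsC S * epsA S n b.val * s ^ (-(twoRho S n b.val)) * r⁻¹ * (1 - isN2 S n b.val)) * heps2
      + ((r - r⁻¹) * (∑ x : Fin (bigN S n), if pr b < x then r ^ (twoRho S n x.val) else 0)
          * s ^ (twoRho S n b.val) * epsC S * epsC S) * hpe
      + ((r - r⁻¹) * (∑ x : Fin (bigN S n), if pr b < x then r ^ (twoRho S n x.val) else 0)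
          * s ^ (twoRho S n b.val) * epsC S * epsA S n b.val) * heps2
  · have hk1 : kd a (pr b) = 0 := by rw [kd, if_neg hab]
    have hk2 : kd b (pr a) = 0 := by
      rw [kd, if_neg]; intro h; exact hab ((pr_pr a).symm.trans (congrArg pr h.symm))
    have hk4 := isN2_mul_ne S n b a hab
    rw [hk1, hk2, hk4]; ring

end Part2

/-- the metric is an eigenvector of the braiding matrix in both index
pairs: `C_{ab} R̂^{ab}_{cd} = ε r^{ε−N} C_{cd}` and `C^{cd} R̂^{ab}_{cd} = ε r^{ε−N} C^{ab}`. -/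
theorem statement19 (S : BCDSeries) (n : ℕ) (r s : ℂ) (hr : r ≠ 0) (hs : s ^ 2 = r)
    (q : Fin (bigN S n) → Fin (bigN S n) → ℂ)
    (hq0 : ∀ a b, q a b ≠ 0)
    (hqaa : ∀ a, q a a = r)
    (hqsym : ∀ a b, q b a * q a b = r ^ 2)
    (hqpr1 : ∀ a b, q a b * q a (pr b) = r ^ 2)
    (hqpr2 : ∀ a b, q a b * q (pr a) b = r ^ 2)
    (hqpr3 : ∀ a b, q a b = q (pr a) (pr b))
    :
    (∀ c d : Fin (bigN S n),
      (∑ a : Fin (bigN S n), ∑ b : Fin (bigN S n),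
          Cmet S n s a b * RbcdHat S n r s q a b c d)
        = epsC S * r ^ (epsZ S - (bigN S n : ℤ)) * Cmet S n s c d) ∧
    (∀ a b : Fin (bigN S n),
      (∑ c : Fin (bigN S n), ∑ d : Fin (bigN S n),
          Cup S n s c d * RbcdHat S n r s q a b c d)
        = epsC S * r ^ (epsZ S - (bigN S n : ℤ)) * Cup S n s a b) := by
  constructor
  · intro c d
    exact part1 S n r s hr hs q hqaa hqpr1 hqpr2 c d
  · intro a b
    exact part2 S n r s hr hs q hqaa hqpr1 a b
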